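/- For every $d \geq 1$ and every $v_1, \ldots, v_n$ in the closed Euclidean unit ball of $\mathbb{R}^d$, there exist signs $\varepsilon_1, \ldots, \varepsilon_n \in \{-1, +1\}$ such that $\|\varepsilon_1 v_1 + \cdots + \varepsilon_n v_n\|_2 \leq \sqrt{d}$. -/

import Mathlib

lemma round_step {E : Type*} [NormedAddCommGroup E] [InnerProductSpace ℝ E]
    (w u : E) (x : ℝ) (hx : |x| ≤ 1) :
    ∃ e : ℝ, (e = 1 ∨ e = -1) ∧
      ‖w + (e - x) • u‖ ^ 2 ≤ ‖w‖ ^ 2 + (1 - x ^ 2) * ‖u‖ ^ 2 := by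
  have hxx := abs_le.mp hx
  have expand : ∀ c : ℝ, ‖w + c • u‖ ^ 2
      = ‖w‖ ^ 2 + 2 * c * (inner ℝ w u : ℝ) + c ^ 2 * ‖u‖ ^ 2 := by
    intro c
    rw [norm_add_sq_real, real_inner_smul_right, norm_smul]
    simp [mul_pow]
    ring
  have hu : (0:ℝ) ≤ ‖u‖ ^ 2 := sq_nonneg _
  have key := mul_nonneg (mul_nonneg (by linarith : (0:ℝ) ≤ 1 - x) (by linarith : (0:ℝ) ≤ 1 + x)) hu
  by_cases h : ‖w + ((1:ℝ) - x) • u‖ ^ 2 ≤ ‖w + ((-1:ℝ) - x) • u‖ ^ 2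
  · refine ⟨1, Or.inl rfl, ?_⟩
    rw [expand ((1:ℝ)-x), expand ((-1:ℝ)-x)] at h
    rw [expand]
    nlinarith
  · refine ⟨-1, Or.inr rfl, ?_⟩
    push_neg at h
    rw [expand ((1:ℝ)-x), expand ((-1:ℝ)-x)] at h
    rw [expand]
    nlinarith
lemma round_all {E : Type*} [NormedAddCommGroup E] [InnerProductSpace ℝ E]
    {n : ℕ} (v : Fin n → E) (x : Fin n → ℝ) (hx : ∀ i, |x i| ≤ 1)
    (s : Finset (Fin n)) :
    ∃ ε : Fin n → ℝ, (∀ i, ε i = 1 ∨ ε i = -1) ∧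
      ‖∑ i ∈ s, (ε i - x i) • v i‖ ^ 2 ≤ ∑ i ∈ s, (1 - x i ^ 2) * ‖v i‖ ^ 2 := by
  induction s using Finset.induction with
  | empty => exact ⟨fun _ => 1, fun _ => Or.inl rfl, by simp⟩
  | @insert a s ha ih =>
    obtain ⟨ε, hε, hb⟩ := ih
    obtain ⟨e, he, hle⟩ := round_step (∑ i ∈ s, (ε i - x i) • v i) (v a) (x a) (hx a)
    refine ⟨Function.update ε a e, ?_, ?_⟩
    · intro i
      rcases eq_or_ne i a with rfl | hi
      · simpa using he
      · simpa [Function.update_of_ne hi] using hε i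
    · rw [Finset.sum_insert ha, Finset.sum_insert ha]
      have hs : ∑ i ∈ s, (Function.update ε a e i - x i) • v i
          = ∑ i ∈ s, (ε i - x i) • v i :=
        Finset.sum_congr rfl fun i hi => by
          rw [Function.update_of_ne (by rintro rfl; exact ha hi)]
      rw [hs, Function.update_self, add_comm ((e - x a) • v a)]
      calc ‖(∑ i ∈ s, (ε i - x i) • v i) + (e - x a) • v a‖ ^ 2
          ≤ ‖∑ i ∈ s, (ε i - x i) • v i‖ ^ 2 + (1 - x a ^ 2) * ‖v a‖ ^ 2 := hle
        _ ≤ (∑ i ∈ s, (1 - x i ^ 2) * ‖v i‖ ^ 2) + (1 - x a ^ 2) * ‖v a‖ ^ 2 := by linarith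
        _ = (1 - x a ^ 2) * ‖v a‖ ^ 2 + ∑ i ∈ s, (1 - x i ^ 2) * ‖v i‖ ^ 2 := by ring
lemma frac_step {d n : ℕ} (v : Fin n → EuclideanSpace ℝ (Fin d))
    (x : Fin n → ℝ) (hx : ∀ i, |x i| ≤ 1) (hsum : ∑ i, x i • v i = 0)
    (hcard : d < (Finset.univ.filter fun i => |x i| < 1).card) :
    ∃ y : Fin n → ℝ, (∀ i, |y i| ≤ 1) ∧ ∑ i, y i • v i = 0 ∧
      (Finset.univ.filter fun i => |y i| < 1).card
        < (Finset.univ.filter fun i => |x i| < 1).card := by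
  set F := Finset.univ.filter fun i => |x i| < 1 with hF
  have hnli : ¬ LinearIndependent ℝ (fun i : F => v i) := by
    intro h
    have := h.fintype_card_le_finrank
    rw [finrank_euclideanSpace] at this
    simp only [Fintype.card_coe, Fintype.card_fin] at this
    omega
  obtain ⟨g, hg0, j0, hj0⟩ := Fintype.not_linearIndependent_iff.mp hnli
  set lam : Fin n → ℝ := fun i => if h : i ∈ F then g ⟨i, h⟩ else 0 with hlam
  have hlamF : ∀ (i : F), lam i = g i := fun i => dif_pos i.2
  have hlam0 : ∀ i ∉ F, lam i = 0 := fun i hi => dif_neg hi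
  have hmemF : ∀ i, lam i ≠ 0 → i ∈ F := fun i hi => by
    by_contra h; exact hi (hlam0 i h)
  have hlsum : ∑ i, lam i • v i = 0 := by
    rw [← Finset.sum_subset (Finset.subset_univ F)
      (fun i _ hi => by rw [hlam0 i hi, zero_smul])]
    rw [← Finset.sum_coe_sort F (fun i => lam i • v i), ← hg0]
    exact Finset.sum_congr rfl fun i _ => by rw [hlamF]
  set S := F.filter fun i => lam i ≠ 0 with hS
  have hSne : S.Nonempty := ⟨j0, by
    simp only [hS, Finset.mem_filter]
    exact ⟨j0.2, by rw [hlamF]; exact hj0⟩⟩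
  set τ : Fin n → ℝ := fun i => if 0 < lam i then (1 - x i) / lam i else (-1 - x i) / lam i
    with hτ
  have hτ0 : ∀ i ∈ S, 0 ≤ τ i := by
    intro i hi
    obtain ⟨hiF, hine⟩ := Finset.mem_filter.mp hi
    have hxi' := abs_lt.mp (Finset.mem_filter.mp hiF).2
    simp only [hτ]
    by_cases hp : 0 < lam i
    · simp only [hp, if_true]
      exact div_nonneg (by linarith) hp.le
    · simp only [hp, if_false]
      have hn : lam i < 0 := lt_of_le_of_ne (not_lt.mp hp) hine
      exact div_nonneg_iff.mpr (Or.inr ⟨by linarith, hn.le⟩)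
  set t := S.inf' hSne τ with ht
  have ht0 : 0 ≤ t := Finset.le_inf' hSne τ hτ0
  obtain ⟨j, hjS, hjt⟩ := Finset.exists_mem_eq_inf' hSne τ
  set y : Fin n → ℝ := fun i => x i + t * lam i with hy
  have hbound : ∀ i, lam i ≠ 0 → |y i| ≤ 1 ∧ (t = τ i → ¬ |y i| < 1) := by
    intro i hine
    have hiF : i ∈ F := hmemF i hine
    have hiS : i ∈ S := Finset.mem_filter.mpr ⟨hiF, hine⟩
    have hxi' := abs_lt.mp (Finset.mem_filter.mp hiF).2
    have hti : t ≤ τ i := Finset.inf'_le τ hiS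
    have hyv : y i = x i + t * lam i := rfl
    by_cases hp : 0 < lam i
    · have hτm : τ i * lam i = 1 - x i := by
        simp only [hτ, hp, if_true]; field_simp
      have h1 : t * lam i ≤ 1 - x i := hτm ▸ mul_le_mul_of_nonneg_right hti hp.le
      have h2 : 0 ≤ t * lam i := mul_nonneg ht0 hp.le
      constructor
      · rw [hyv, abs_le]; constructor <;> linarith
      · intro hteq
        have hv : y i = 1 := by rw [hyv, hteq, hτm]; ring
        rw [hv]; norm_num
    · have hn : lam i < 0 := lt_of_le_of_ne (not_lt.mp hp) hine
      have hτm : τ i * lam i = -1 - x i := by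
        simp only [hτ, hp, if_false]; field_simp
      have h1 : -1 - x i ≤ t * lam i := hτm ▸ mul_le_mul_of_nonpos_right hti hn.le
      have h2 : t * lam i ≤ 0 := mul_nonpos_iff.mpr (Or.inl ⟨ht0, hn.le⟩)
      constructor
      · rw [hyv, abs_le]; constructor <;> linarith
      · intro hteq
        have hv : y i = -1 := by rw [hyv, hteq, hτm]; ring
        rw [hv]; norm_num
  refine ⟨y, ?_, ?_, ?_⟩
  · intro i
    by_cases hi : lam i = 0
    · simp only [hy, hi, mul_zero, add_zero]; exact hx i
    · exact (hbound i hi).1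
  · have : ∑ i, y i • v i = ∑ i, x i • v i + t • ∑ i, lam i • v i := by
      rw [Finset.smul_sum, ← Finset.sum_add_distrib]
      exact Finset.sum_congr rfl fun i _ => by
        simp only [hy]; rw [add_smul, smul_smul]
    rw [this, hsum, hlsum, smul_zero, add_zero]
  · apply Finset.card_lt_card
    rw [Finset.ssubset_iff_of_subset]
    · refine ⟨j, (Finset.mem_filter.mp hjS).1, ?_⟩
      simp only [Finset.mem_filter, Finset.mem_univ, true_and]
      exact (hbound j (Finset.mem_filter.mp hjS).2).2 hjt
    · intro i hi
      have hyi : |y i| < 1 := (Finset.mem_filter.mp hi).2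
      by_cases hli : lam i = 0
      · simp only [Finset.mem_filter, Finset.mem_univ, true_and, hF]
        simpa [hy, hli] using hyi
      · exact hmemF i hli

lemma frac_exists {d n : ℕ} (v : Fin n → EuclideanSpace ℝ (Fin d)) :
    ∃ x : Fin n → ℝ, (∀ i, |x i| ≤ 1) ∧ ∑ i, x i • v i = 0 ∧
      (Finset.univ.filter fun i => |x i| < 1).card ≤ d := by
  suffices H : ∀ k : ℕ, ∀ x : Fin n → ℝ, (∀ i, |x i| ≤ 1) → ∑ i, x i • v i = 0 →
      (Finset.univ.filter fun i => |x i| < 1).card ≤ k →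
      ∃ y : Fin n → ℝ, (∀ i, |y i| ≤ 1) ∧ ∑ i, y i • v i = 0 ∧
        (Finset.univ.filter fun i => |y i| < 1).card ≤ d by
    exact H n 0 (by simp) (by simp) (le_trans (Finset.card_filter_le _ _) (by simp))
  intro k
  induction k with
  | zero =>
    intro x h1 h2 h3
    exact ⟨x, h1, h2, by omega⟩
  | succ k ih =>
    intro x h1 h2 h3
    by_cases hc : (Finset.univ.filter fun i => |x i| < 1).card ≤ d
    · exact ⟨x, h1, h2, hc⟩
    · obtain ⟨y, hy1, hy2, hy3⟩ := frac_step v x h1 h2 (by omega)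
      exact ih y hy1 hy2 (by omega)

theorem vector_balancing_euclidean (d n : ℕ) (hd : 1 ≤ d)
    (v : Fin n → EuclideanSpace ℝ (Fin d))
    (hball : ∀ i, ‖v i‖ ≤ 1) :
    ∃ ε : Fin n → ℝ, (∀ i, ε i = 1 ∨ ε i = -1) ∧
      ‖∑ i, ε i • v i‖ ≤ Real.sqrt d := by
  obtain ⟨x, hx1, hx2, hx3⟩ := frac_exists v
  obtain ⟨ε, hε1, hε2⟩ := round_all v x hx1 Finset.univ
  refine ⟨ε, hε1, ?_⟩
  have hsum : ∑ i, (ε i - x i) • v i = ∑ i, ε i • v i := by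
    have : ∑ i, (ε i - x i) • v i = ∑ i, ε i • v i - ∑ i, x i • v i := by
      rw [← Finset.sum_sub_distrib]
      exact Finset.sum_congr rfl fun i _ => by rw [sub_smul]
    rw [this, hx2, sub_zero]
  rw [hsum] at hε2
  set F := Finset.univ.filter fun i => |x i| < 1 with hF
  have hbnd : ∑ i, (1 - x i ^ 2) * ‖v i‖ ^ 2 ≤ (d : ℝ) := by
    have he : ∑ i, (1 - x i ^ 2) * ‖v i‖ ^ 2 = ∑ i ∈ F, (1 - x i ^ 2) * ‖v i‖ ^ 2 := by
      refine (Finset.sum_subset (Finset.subset_univ F) ?_).symm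
      intro i _ hiF
      have h1 : |x i| = 1 := le_antisymm (hx1 i)
        (not_lt.mp fun h => hiF (Finset.mem_filter.mpr ⟨Finset.mem_univ i, h⟩))
      have : x i ^ 2 = 1 := by rw [← sq_abs, h1]; norm_num
      rw [this]; ring
    rw [he]
    calc ∑ i ∈ F, (1 - x i ^ 2) * ‖v i‖ ^ 2 ≤ ∑ _i ∈ F, (1:ℝ) := by
          refine Finset.sum_le_sum fun i _ => ?_
          have hx2i : x i ^ 2 ≤ 1 := by
            have := sq_abs (x i) ▸ pow_le_one₀ (abs_nonneg _) (hx1 i)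
            nlinarith [sq_abs (x i), hx1 i, abs_nonneg (x i)]
          have hv2 : ‖v i‖ ^ 2 ≤ 1 := pow_le_one₀ (norm_nonneg _) (hball i)
          have h0 : 0 ≤ 1 - x i ^ 2 := by linarith
          calc (1 - x i ^ 2) * ‖v i‖ ^ 2 ≤ 1 * 1 :=
                mul_le_mul (by nlinarith [sq_nonneg (x i)]) hv2 (sq_nonneg _) zero_le_one
            _ = 1 := by ring
      _ = (F.card : ℝ) := by simp
      _ ≤ (d : ℝ) := by exact_mod_cast hx3
  have hfinal : ‖∑ i, ε i • v i‖ ^ 2 ≤ (d : ℝ) := le_trans hε2 hbnd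
  calc ‖∑ i, ε i • v i‖ = Real.sqrt (‖∑ i, ε i • v i‖ ^ 2) := (Real.sqrt_sq (norm_nonneg _)).symm
    _ ≤ Real.sqrt d := Real.sqrt_le_sqrt hfinal
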